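/- Let K be a finite field and f ∈ K[X] a squarefree polynomial of degree n. Then f is m-smooth (all irreducible factors have degree ≤ m) if and only if f divides the product ∏_{i=1}^{m} (X^{|K|^i} − X) in K[X]. -/

import Mathlib

open Polynomial

section Aux

variable {K : Type*} [Field K] [Fintype K]

/-- In `AdjoinRoot g`, every element is fixed by `x ↦ x ^ |K|^i` as soon as the root is. -/
private lemma aux_pow_eq_self (g : Polynomial K) (hg : Irreducible g) (i : ℕ)
    (hroot : (AdjoinRoot.root g) ^ (Fintype.card K ^ i) = AdjoinRoot.root g)
    (x : AdjoinRoot g) : x ^ (Fintype.card K ^ i) = x := by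
  haveI := Fact.mk hg
  set p := ringChar K with hp
  haveI : Fact p.Prime := ⟨CharP.char_is_prime K p⟩
  haveI : CharP (AdjoinRoot g) p :=
    charP_of_injective_algebraMap (algebraMap K (AdjoinRoot g)).injective p
  obtain ⟨r, -, hq⟩ := FiniteField.card K p
  have hpow : ∀ y : AdjoinRoot g, y ^ (Fintype.card K ^ i) = y ^ p ^ ((r : ℕ) * i) := by
    intro y; rw [hq, ← pow_mul]
  let ψ : AdjoinRoot g →ₐ[K] AdjoinRoot g :=
    { iterateFrobenius (AdjoinRoot g) p ((r : ℕ) * i) with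
      commutes' := by
        intro a
        simp only [RingHom.toMonoidHom_eq_coe, OneHom.toFun_eq_coe, MonoidHom.toOneHom_coe,
          MonoidHom.coe_coe, iterateFrobenius_def]
        rw [show p ^ ((r : ℕ) * i) = (Fintype.card K) ^ i by rw [hq, ← pow_mul],
          ← map_pow, FiniteField.pow_card_pow] }
  have hψ : ψ = AlgHom.id K (AdjoinRoot g) := by
    apply AdjoinRoot.algHom_ext
    show (AdjoinRoot.root g) ^ p ^ ((r : ℕ) * i) = AdjoinRoot.root g
    rw [← hpow, hroot]
  have hx := congrArg (fun φ => φ x) hψ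
  rw [hpow x]
  exact hx

/-- An irreducible polynomial of degree `d` divides `X^(q^d) - X`. -/
private lemma aux_dvd (g : Polynomial K) (hg : Irreducible g) :
    g ∣ X ^ (Fintype.card K ^ g.natDegree) - X := by
  haveI := Fact.mk hg
  haveI : Module.Finite K (AdjoinRoot g) := (AdjoinRoot.powerBasis hg.ne_zero).finite
  haveI : Finite (AdjoinRoot g) := Module.finite_of_finite K
  haveI : Fintype (AdjoinRoot g) := Fintype.ofFinite _
  have hcard : Fintype.card (AdjoinRoot g) = Fintype.card K ^ g.natDegree := by
    rw [Module.card_eq_pow_finrank (K := K),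
      (AdjoinRoot.powerBasis hg.ne_zero).finrank, AdjoinRoot.powerBasis_dim]
  have hroot : (AdjoinRoot.root g) ^ (Fintype.card K ^ g.natDegree) = AdjoinRoot.root g := by
    rw [← hcard, FiniteField.pow_card]
  have haev : (aeval (AdjoinRoot.root g)) (X ^ (Fintype.card K ^ g.natDegree) - X : K[X]) = 0 := by
    simp [hroot]
  have hmin := minpoly.dvd K (AdjoinRoot.root g) haev
  rw [AdjoinRoot.minpoly_root hg.ne_zero] at hmin
  exact (dvd_mul_right g _).trans hmin

/-- If an irreducible `g` divides `X^(q^i) - X` with `i ≥ 1`, then `deg g ≤ i`. -/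
private lemma aux_deg_le (g : Polynomial K) (hg : Irreducible g) (i : ℕ) (hi : 1 ≤ i)
    (hdvd : g ∣ X ^ (Fintype.card K ^ i) - X) : g.natDegree ≤ i := by
  by_contra hlt
  push_neg at hlt
  haveI := Fact.mk hg
  haveI : Module.Finite K (AdjoinRoot g) := (AdjoinRoot.powerBasis hg.ne_zero).finite
  haveI : Finite (AdjoinRoot g) := Module.finite_of_finite K
  haveI : Fintype (AdjoinRoot g) := Fintype.ofFinite _
  have hcard : Fintype.card (AdjoinRoot g) = Fintype.card K ^ g.natDegree := by
    rw [Module.card_eq_pow_finrank (K := K),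
      (AdjoinRoot.powerBasis hg.ne_zero).finrank, AdjoinRoot.powerBasis_dim]
  have hroot : (AdjoinRoot.root g) ^ (Fintype.card K ^ i) = AdjoinRoot.root g := by
    obtain ⟨c, hc⟩ := hdvd
    have := congrArg (aeval (AdjoinRoot.root g)) hc
    simp only [map_sub, map_pow, aeval_X, map_mul, AdjoinRoot.aeval_eq,
      AdjoinRoot.mk_self, zero_mul] at this
    exact sub_eq_zero.mp this
  have hall := aux_pow_eq_self g hg i hroot
  have hq1 : 1 < Fintype.card K := Fintype.one_lt_card
  have hne : (X ^ (Fintype.card K) ^ i - X : (AdjoinRoot g)[X]) ≠ 0 :=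
    FiniteField.X_pow_card_pow_sub_X_ne_zero _ (by omega) hq1
  apply hne
  apply Polynomial.eq_zero_of_natDegree_lt_card_of_eval_eq_zero _ (f := (id : AdjoinRoot g → _))
    Function.injective_id
  · intro x
    simp [hall x]
  · rw [FiniteField.X_pow_card_pow_sub_X_natDegree_eq _ (by omega) hq1, hcard]
    exact Nat.pow_lt_pow_right hq1 hlt

end Aux

/-- A squarefree polynomial `f` of degree `n ≥ 1` over a finite field `K` is `m`-smooth
(all irreducible factors have degree `≤ m`) iff `f` divides `∏_{i=1}^m (X^{|K|^i} − X)`. -/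
theorem stmt16 (K : Type*) [Field K] [Fintype K] (f : Polynomial K) (n m : ℕ)
    (hf : Squarefree f) (hn : f.natDegree = n) (hn1 : 1 ≤ n) :
    (∀ g : Polynomial K, Irreducible g → g ∣ f → g.natDegree ≤ m) ↔
      f ∣ ∏ i ∈ Finset.Icc 1 m, (X ^ (Fintype.card K ^ i) - X) := by
  have hf0 : f ≠ 0 := fun h => by simp [h] at hn; omega
  haveI : NormalizationMonoid (Polynomial K) := UniqueFactorizationMonoid.normalizationMonoid.toNormalizationMonoid
  constructor
  · intro hsm
    have hnodup : (UniqueFactorizationMonoid.normalizedFactors f).Nodup :=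
      (UniqueFactorizationMonoid.squarefree_iff_nodup_normalizedFactors hf0).mp hf
    set s : Finset (Polynomial K) := ⟨UniqueFactorizationMonoid.normalizedFactors f, hnodup⟩
      with hs
    have hprod : (∏ p ∈ s, p) = (UniqueFactorizationMonoid.normalizedFactors f).prod := by
      simp [hs, Finset.prod, Multiset.map_id]
    have hassoc := UniqueFactorizationMonoid.prod_normalizedFactors hf0
    rw [← (hassoc.dvd_iff_dvd_left), ← hprod]
    apply Finset.prod_dvd_of_coprime
    · intro p hp q hq hne
      have hip : Irreducible p :=
        (UniqueFactorizationMonoid.prime_of_normalized_factor p (by simpa [hs] using hp)).irreducible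
      show IsCoprime p q
      rw [hip.coprime_iff_not_dvd]
      intro hdvd
      have hiq : Irreducible q :=
        (UniqueFactorizationMonoid.prime_of_normalized_factor q (by simpa [hs] using hq)).irreducible
      exact hne ((hip.associated_of_dvd hiq hdvd).eq_of_normalized
        (UniqueFactorizationMonoid.normalize_normalized_factor p (by simpa [hs] using hp))
        (UniqueFactorizationMonoid.normalize_normalized_factor q (by simpa [hs] using hq)))
    · intro p hp
      have hmem : p ∈ UniqueFactorizationMonoid.normalizedFactors f := by simpa [hs] using hp
      have hip : Irreducible p :=
        (UniqueFactorizationMonoid.prime_of_normalized_factor p hmem).irreducible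
      have hpf : p ∣ f := UniqueFactorizationMonoid.dvd_of_mem_normalizedFactors hmem
      have h1 : 1 ≤ p.natDegree := hip.natDegree_pos
      have h2 : p.natDegree ≤ m := hsm p hip hpf
      exact (aux_dvd p hip).trans
        (Finset.dvd_prod_of_mem _ (Finset.mem_Icc.mpr ⟨h1, h2⟩))
  · intro hdvd g hg hgf
    have hgP : g ∣ ∏ i ∈ Finset.Icc 1 m, (X ^ (Fintype.card K ^ i) - X) := hgf.trans hdvd
    obtain ⟨i, hi, hgi⟩ := (UniqueFactorizationMonoid.irreducible_iff_prime.mp hg).exists_mem_finset_dvd hgP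
    obtain ⟨hi1, him⟩ := Finset.mem_Icc.mp hi
    exact (aux_deg_le g hg i hi1 hgi).trans him
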